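/- Let V ⊆ ℤ² be a 2-VAS containing a vector (x,0) with x > 0 and a vector (x′,y′) with x′ ≤ 0 and y′ > 0. Then the vector s = ((−2x′+1)·x + x′, y′) has strictly positive coordinates, is box-reachable in V (witnessed by the path (x,0)^{−x′}, (x′,y′), (x,0)^{−x′+1}), and moreover for every integer m ≥ 1 the multiple m·s is box-reachable in V. -/

import Mathlib

/-- `t` is box-reachable in the `d`-VAS `V` via the specific path `π`. -/
def BoxReachVia {d : ℕ} (V : Finset (Fin d → ℤ)) (π : List (Fin d → ℤ))
    (t : Fin d → ℤ) : Prop :=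
  (∀ v ∈ π, v ∈ V) ∧ π.sum = t ∧
    ∀ j : ℕ, ∀ i : Fin d, 0 ≤ ((π.take j).sum) i ∧ ((π.take j).sum) i ≤ t i

/-- `t` is box-reachable in the `d`-VAS `V`. -/
def BoxReach {d : ℕ} (V : Finset (Fin d → ℤ)) (t : Fin d → ℤ) : Prop :=
  ∃ π : List (Fin d → ℤ), BoxReachVia V π t

/-- Concatenating two box-reachability witnesses. -/
lemma boxReachVia_append {d : ℕ} {V : Finset (Fin d → ℤ)}
    {ρ π : List (Fin d → ℤ)} {s t : Fin d → ℤ}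
    (hρ : BoxReachVia V ρ s) (hπ : BoxReachVia V π t) :
    BoxReachVia V (ρ ++ π) (s + t) := by
  obtain ⟨hρ1, hρ2, hρ3⟩ := hρ
  obtain ⟨hπ1, hπ2, hπ3⟩ := hπ
  refine ⟨?_, ?_, ?_⟩
  · intro v hv
    rcases List.mem_append.mp hv with h | h
    · exact hρ1 v h
    · exact hπ1 v h
  · rw [List.sum_append, hρ2, hπ2]
  · intro j i
    rw [List.take_append, List.sum_append]
    have h1 := hρ3 j i
    have h2 := hπ3 (j - ρ.length) i
    simp only [Pi.add_apply]
    constructor <;> linarith [h1.1, h1.2, h2.1, h2.2]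

/-- If a 2-VAS `V` contains `(x,0)` with `x > 0` and `(x′,y′)` with `x′ ≤ 0`,
`y′ > 0`, then `s = ((−2x′+1)x + x′, y′)` has strictly positive coordinates,
is box-reachable via the path `(x,0)^{−x′}, (x′,y′), (x,0)^{−x′+1}`, and all
positive multiples `m·s` are box-reachable. -/
theorem pos_vector_boxReachable (V : Finset (Fin 2 → ℤ)) (x x' y' : ℤ)
    (hx : 0 < x) (hx' : x' ≤ 0) (hy' : 0 < y')
    (hmem1 : ![x, 0] ∈ V) (hmem2 : ![x', y'] ∈ V) :
    (0 < (-2 * x' + 1) * x + x' ∧ 0 < y') ∧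
    BoxReachVia V
      (List.replicate (-x').toNat ![x, 0] ++ [![x', y']] ++
        List.replicate (-x' + 1).toNat ![x, 0])
      ![(-2 * x' + 1) * x + x', y'] ∧
    (∀ m : ℤ, 1 ≤ m → BoxReach V (m • ![(-2 * x' + 1) * x + x', y'])) := by
  set a : Fin 2 → ℤ := ![x, 0] with ha
  set b : Fin 2 → ℤ := ![x', y'] with hb
  set n : ℕ := (-x').toNat with hn
  have hnz : (n : ℤ) = -x' := Int.toNat_of_nonneg (by linarith)
  have hn1 : (-x' + 1).toNat = n + 1 := by
    rw [Int.toNat_add (by linarith) (by norm_num)]; rfl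
  have hxx : (0:ℤ) ≤ (-x') * (x - 1) :=
    mul_nonneg (by linarith) (by linarith)
  have hpos : 0 < (-2 * x' + 1) * x + x' := by nlinarith
  set t : Fin 2 → ℤ := ![(-2 * x' + 1) * x + x', y'] with ht
  have ht0 : t 0 = (-2 * x' + 1) * x + x' := rfl
  have ht1 : t 1 = y' := rfl
  have ha0 : a 0 = x := rfl
  have ha1 : a 1 = 0 := rfl
  have hb0 : b 0 = x' := rfl
  have hb1 : b 1 = y' := rfl
  have hvia : BoxReachVia V
      (List.replicate n a ++ [b] ++ List.replicate (n + 1) a) t := by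
    refine ⟨?_, ?_, ?_⟩
    · intro v hv
      simp only [List.mem_append, List.mem_replicate, List.mem_singleton] at hv
      rcases hv with (⟨-, rfl⟩ | rfl) | ⟨-, rfl⟩ <;> assumption
    · rw [List.sum_append, List.sum_append, List.sum_replicate, List.sum_replicate,
        List.sum_singleton]
      funext i
      fin_cases i <;>
        simp only [Fin.mk_zero, Fin.mk_one, Fin.isValue, Pi.add_apply, Pi.smul_apply,
          nsmul_eq_mul, Pi.mul_apply, Pi.natCast_apply, ha0, ha1, hb0, hb1, ht0, ht1, mul_zero, add_zero, zero_add,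
          Nat.cast_add, Nat.cast_one, Pi.one_apply] <;> (try rw [hnz]) <;> ring
    · intro j i
      rw [List.take_append, List.take_append,
        List.sum_append, List.sum_append, List.take_replicate, List.take_replicate,
        List.sum_replicate, List.sum_replicate]
      have hlen1 : (List.replicate n a ++ [b]).length = n + 1 := by simp
      rw [hlen1, List.length_replicate]
      set k1 : ℕ := j ⊓ n with hk1
      set k2 : ℕ := (j - (n + 1)) ⊓ (n + 1) with hk2
      have hk1n : k1 ≤ n := min_le_right _ _
      have hk2n : k2 ≤ n + 1 := min_le_right _ _
      by_cases hjn : j ≤ n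
      · have hjn0 : j - n = 0 := Nat.sub_eq_zero_of_le hjn
        rw [hjn0]
        have hk2z : k2 = 0 := by rw [hk2]; omega
        rw [hk2z]
        simp only [List.take_zero, List.sum_nil, zero_smul, add_zero]
        fin_cases i <;>
          simp only [Fin.mk_zero, Fin.mk_one, Fin.isValue, Pi.smul_apply,
            nsmul_eq_mul, Pi.mul_apply, Pi.natCast_apply, ha0, ha1, hb0, hb1, ht0, ht1, mul_zero] <;> constructor
        · positivity
        · have h1 : (k1 : ℤ) ≤ n := by exact_mod_cast hk1n
          nlinarith
        · exact le_refl 0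
        · linarith
      · have hjn0 : 1 ≤ j - n := by omega
        rw [List.take_of_length_le (by simpa using hjn0), List.sum_singleton]
        have hk1n' : k1 = n := by rw [hk1]; omega
        rw [hk1n']
        have h2 : (k2 : ℤ) ≤ (n:ℤ) + 1 := by exact_mod_cast hk2n
        fin_cases i <;>
          simp only [Fin.mk_zero, Fin.mk_one, Fin.isValue, Pi.add_apply, Pi.smul_apply,
            nsmul_eq_mul, Pi.mul_apply, Pi.natCast_apply, ha0, ha1, hb0, hb1, ht0, ht1, mul_zero, add_zero, zero_add] <;>
          constructor
        · have hnn : (0:ℤ) ≤ (k2 : ℤ) * x := by positivity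
          nlinarith
        · nlinarith
        · linarith
        · linarith
  have htnn : ∀ i : Fin 2, 0 ≤ t i := by
    intro i
    fin_cases i <;>
      simp only [Fin.mk_zero, Fin.mk_one, Fin.isValue, ht0, ht1] <;> linarith
  refine ⟨⟨hpos, hy'⟩, by rw [hn1]; exact hvia, ?_⟩
  intro m hm
  refine Int.le_induction (motive := fun m _ => BoxReach V (m • t)) ?_ (fun k _ ih => ?_) m hm
  · refine ⟨List.replicate n a ++ [b] ++ List.replicate (n + 1) a, ?_⟩
    rw [one_smul]
    exact hvia
  · obtain ⟨ρ, hρ⟩ := ih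
    refine ⟨ρ ++ (List.replicate n a ++ [b] ++ List.replicate (n + 1) a), ?_⟩
    have h := boxReachVia_append hρ hvia
    rwa [show k • t + t = (k + 1) • t by rw [add_smul, one_smul]] at h
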